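/- With q, h, p^u as in the Gaussian example, for every γ > 0, lim_{u→∞} P^u( h(X)·q(X)/p^u(X) > γ ) = 0, where X ~ p^u. Consequently, taking u_k = k and one sample X^k ~ P^{u_k} per iteration, the flat-AMIS estimator ψ̂_K = (1/K) ∑_{k=1}^K h(X^k) q(X^k)/p^{u_k}(X^k) converges to 0 in probability as K → ∞, and hence is not a consistent estimator of ψ = 1/√2. -/

import Mathlib

open MeasureTheory ProbabilityTheory Filter Real
open scoped ENNReal BigOperators Topology

lemma sqrt_add_le' (a b : ℝ) (ha : 0 ≤ a) (hb : 0 ≤ b) :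
    Real.sqrt (a + b) ≤ Real.sqrt a + Real.sqrt b := by
  have hB : 0 ≤ Real.sqrt a + Real.sqrt b := by positivity
  calc Real.sqrt (a + b) ≤ Real.sqrt ((Real.sqrt a + Real.sqrt b) ^ 2) := by
        apply Real.sqrt_le_sqrt
        have h1 := Real.sq_sqrt ha
        have h2 := Real.sq_sqrt hb
        nlinarith [mul_nonneg (Real.sqrt_nonneg a) (Real.sqrt_nonneg b)]
    _ = Real.sqrt a + Real.sqrt b := Real.sqrt_sq hB

lemma gauss_tail (u a : ℝ) (h : a + 1 ≤ u) :
    gaussianReal u 1 (Set.Iic a) ≤ ENNReal.ofReal (Real.exp (-(u - a) / 2)) := by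
  rw [gaussianReal_apply_eq_integral u one_ne_zero]
  apply ENNReal.ofReal_le_ofReal
  have h1 : (1:ℝ) ≤ Real.sqrt (2 * π) := by
    rw [show (1:ℝ) = Real.sqrt 1 by simp]
    exact Real.sqrt_le_sqrt (by nlinarith [Real.pi_gt_three])
  have hbound : ∀ x ∈ Set.Iic a, gaussianPDFReal u 1 x ≤
      Real.exp (-(u - a) / 2) * Real.exp (x - a) := by
    intro x _
    have hpdf : gaussianPDFReal u 1 x = (Real.sqrt (2*π))⁻¹ * Real.exp (-(x-u)^2/2) := by
      simp [gaussianPDFReal]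
    rw [hpdf, ← Real.exp_add]
    calc (Real.sqrt (2*π))⁻¹ * Real.exp (-(x-u)^2/2)
        ≤ 1 * Real.exp (-(x-u)^2/2) := by
          apply mul_le_mul_of_nonneg_right _ (Real.exp_pos _).le
          exact inv_le_one_of_one_le₀ h1
      _ = Real.exp (-(x-u)^2/2) := one_mul _
      _ ≤ Real.exp (-(u - a) / 2 + (x - a)) := by
          apply Real.exp_le_exp.mpr
          nlinarith [sq_nonneg (x - u + 1)]
  have hInt : IntegrableOn (fun x => Real.exp (-(u - a) / 2) * Real.exp (x - a))
      (Set.Iic a) volume := by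
    simp_rw [Real.exp_sub]
    exact ((integrableOn_exp_Iic a).div_const _).const_mul _
  calc ∫ x in Set.Iic a, gaussianPDFReal u 1 x
      ≤ ∫ x in Set.Iic a, Real.exp (-(u - a) / 2) * Real.exp (x - a) :=
        setIntegral_mono_on ((integrable_gaussianPDFReal u 1).restrict) hInt
          measurableSet_Iic hbound
    _ = Real.exp (-(u - a) / 2) := by
        rw [MeasureTheory.integral_const_mul]
        have : ∫ x in Set.Iic a, Real.exp (x - a) = 1 := by
          simp_rw [Real.exp_sub]
          rw [MeasureTheory.integral_div, integral_exp_Iic, div_self (Real.exp_ne_zero a)]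
        rw [this, mul_one]

theorem gaussian_counterexample
    {Ω' : Type*} [MeasurableSpace Ω'] (μ : Measure Ω') [IsProbabilityMeasure μ]
    (X : ℕ → Ω' → ℝ) (hXmeas : ∀ k, Measurable (X k))
    (hindep : iIndepFun X μ)
    (hlaw : ∀ k : ℕ, Measure.map (X k) μ = gaussianReal ((k : ℝ) + 1) 1)
    (f : ℝ → ℝ → ℝ)
    (hf : ∀ u x, f u x = Real.exp (-x ^ 2 / 2) *
        ((Real.sqrt (2 * π))⁻¹ * Real.exp (-x ^ 2 / 2)) /
        ((Real.sqrt (2 * π))⁻¹ * Real.exp (-(x - u) ^ 2 / 2))) :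
    (∀ γ : ℝ, 0 < γ →
        Tendsto (fun u : ℝ => gaussianReal u 1 {x | γ < f u x}) atTop (𝓝 0)) ∧
    TendstoInMeasure μ
      (fun (K : ℕ) ω => (K : ℝ)⁻¹ * ∑ k ∈ Finset.range K, f ((k : ℝ) + 1) (X k ω))
      atTop (fun _ => 0) ∧
    ¬ TendstoInMeasure μ
      (fun (K : ℕ) ω => (K : ℝ)⁻¹ * ∑ k ∈ Finset.range K, f ((k : ℝ) + 1) (X k ω))
      atTop (fun _ => (Real.sqrt 2)⁻¹) := by
  -- closed form for f
  have hfe : ∀ u x, f u x = Real.exp (u ^ 2 / 2 - u * x - x ^ 2 / 2) := by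
    intro u x
    have hc : (0:ℝ) < (Real.sqrt (2 * π))⁻¹ := by positivity
    rw [hf u x, div_eq_iff (by positivity), mul_left_comm,
      mul_left_comm (Real.exp (u ^ 2 / 2 - u * x - x ^ 2 / 2))]
    congr 1
    rw [← Real.exp_add, ← Real.exp_add]
    congr 1
    ring
  have hfpos : ∀ u x, 0 < f u x := fun u x => by rw [hfe]; exact Real.exp_pos _
  -- upper set inclusion
  have hsub : ∀ u γ x, 0 < γ → γ < f u x →
      x ≤ -u + Real.sqrt (2 * u ^ 2 - 2 * Real.log γ) := by
    intro u γ x hγ hx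
    rw [hfe] at hx
    have hlog : Real.log γ < u ^ 2 / 2 - u * x - x ^ 2 / 2 := by
      have := Real.log_lt_log hγ hx
      rwa [Real.log_exp] at this
    have h1 : (x + u) ^ 2 < 2 * u ^ 2 - 2 * Real.log γ := by nlinarith
    have h2 : x + u ≤ Real.sqrt (2 * u ^ 2 - 2 * Real.log γ) := by
      calc x + u ≤ |x + u| := le_abs_self _
        _ = Real.sqrt ((x + u) ^ 2) := (Real.sqrt_sq_eq_abs _).symm
        _ ≤ _ := Real.sqrt_le_sqrt h1.le
    linarith
  -- measurability of f u
  have hmeasf : ∀ u, Measurable (f u) := by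
    intro u
    have : f u = fun x => Real.exp (u ^ 2 / 2 - u * x - x ^ 2 / 2) := funext (hfe u)
    rw [this]
    fun_prop
  -- Part 1
  have part1 : ∀ γ : ℝ, 0 < γ →
      Tendsto (fun u : ℝ => gaussianReal u 1 {x | γ < f u x}) atTop (𝓝 0) := by
    intro γ hγ
    set c : ℝ := Real.sqrt (2 * |Real.log γ|) with hc
    have hsq : ∀ u : ℝ, 0 ≤ u →
        Real.sqrt (2 * u ^ 2 - 2 * Real.log γ) ≤ Real.sqrt 2 * u + c := by
      intro u hu
      have h1 : 2 * u ^ 2 - 2 * Real.log γ ≤ 2 * u ^ 2 + 2 * |Real.log γ| := by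
        have := neg_abs_le (Real.log γ); linarith
      calc Real.sqrt (2 * u ^ 2 - 2 * Real.log γ)
          ≤ Real.sqrt (2 * u ^ 2 + 2 * |Real.log γ|) := Real.sqrt_le_sqrt h1
        _ ≤ Real.sqrt (2 * u ^ 2) + Real.sqrt (2 * |Real.log γ|) :=
            sqrt_add_le' _ _ (by positivity) (by positivity)
        _ = Real.sqrt 2 * u + c := by
            rw [show (2:ℝ) * u ^ 2 = 2 * u ^ 2 by ring, Real.sqrt_mul (by norm_num),
              Real.sqrt_sq hu]
    have hs2 : Real.sqrt 2 < 2 := by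
      nlinarith [Real.sq_sqrt (by norm_num : (0:ℝ) ≤ 2), Real.sqrt_nonneg 2]
    set D : ℝ → ℝ := fun u => (2 - Real.sqrt 2) * u - c with hD
    have hDtop : Tendsto D atTop atTop := by
      apply Filter.tendsto_atTop_add_const_right
      exact Tendsto.const_mul_atTop (by linarith) tendsto_id
    have hblim : Tendsto (fun u => ENNReal.ofReal (Real.exp (-(D u) / 2))) atTop (𝓝 0) := by
      have h1 : Tendsto (fun u => -(D u) / 2) atTop atBot := by
        apply Tendsto.atBot_div_const (by norm_num)
        exact tendsto_neg_atTop_atBot.comp hDtop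
      have h2 : Tendsto (fun u => Real.exp (-(D u) / 2)) atTop (𝓝 0) :=
        Real.tendsto_exp_atBot.comp h1
      simpa using ENNReal.tendsto_ofReal h2
    refine tendsto_of_tendsto_of_tendsto_of_le_of_le' tendsto_const_nhds hblim
      (Eventually.of_forall fun _ => zero_le) ?_
    filter_upwards [hDtop.eventually_ge_atTop 1, eventually_ge_atTop (0:ℝ)] with u hD1 hu0
    have hA := hsq u hu0
    set A : ℝ := Real.sqrt (2 * u ^ 2 - 2 * Real.log γ) with hAdef
    have hsubset : {x | γ < f u x} ⊆ Set.Iic (-u + A) := fun x hx => hsub u γ x hγ hx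
    have hDle : D u ≤ u - (-u + A) := by
      simp only [hD]; linarith
    calc gaussianReal u 1 {x | γ < f u x}
        ≤ gaussianReal u 1 (Set.Iic (-u + A)) := measure_mono hsubset
      _ ≤ ENNReal.ofReal (Real.exp (-(u - (-u + A)) / 2)) := by
          apply gauss_tail
          simp only [hD] at hD1; linarith
      _ ≤ ENNReal.ofReal (Real.exp (-(D u) / 2)) := by
          apply ENNReal.ofReal_le_ofReal
          apply Real.exp_le_exp.mpr
          linarith
  have part2 : TendstoInMeasure μ
      (fun (K : ℕ) ω => (K : ℝ)⁻¹ * ∑ k ∈ Finset.range K, f ((k : ℝ) + 1) (X k ω))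
      atTop (fun _ => 0) := by
    set S : ℕ → Set ℝ := fun k => {x | Real.exp (-(k:ℝ)) < f ((k:ℝ) + 1) x} with hSdef
    have hS : ∀ k, MeasurableSet (S k) :=
      fun k => measurableSet_lt measurable_const (hmeasf _)
    have hμA : ∀ k, μ (X k ⁻¹' S k) = gaussianReal ((k:ℝ) + 1) 1 (S k) := by
      intro k
      rw [← hlaw k, Measure.map_apply (hXmeas k) (hS k)]
    have hbd : ∀ k : ℕ, μ (X k ⁻¹' S k) ≤
        ENNReal.ofReal (Real.exp 1 * Real.exp (-(k:ℝ) / 20)) := by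
      intro k
      by_cases hk : (2:ℝ) ≤ (k:ℕ)
      · rw [hμA]
        set u : ℝ := (k:ℝ) + 1 with hu
        have hlogrw : 2 * u ^ 2 - 2 * Real.log (Real.exp (-(k:ℝ))) = 2 * u ^ 2 + 2 * (k:ℝ) := by
          rw [Real.log_exp]; ring
        have hsub' : S k ⊆ Set.Iic (-u + Real.sqrt (2 * u ^ 2 + 2 * (k:ℝ))) := by
          intro x hx
          have := hsub u _ x (Real.exp_pos _) hx
          rw [hlogrw] at this
          exact this
        have hB : (0:ℝ) ≤ 2 * u - (1 + (k:ℝ) / 10) := by simp only [hu]; nlinarith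
        have hkey : Real.sqrt (2 * u ^ 2 + 2 * (k:ℝ)) ≤ 2 * u - (1 + (k:ℝ) / 10) := by
          calc Real.sqrt (2 * u ^ 2 + 2 * (k:ℝ))
              ≤ Real.sqrt ((2 * u - (1 + (k:ℝ) / 10)) ^ 2) := by
                apply Real.sqrt_le_sqrt
                simp only [hu]
                nlinarith [sq_nonneg ((k:ℝ) - 2)]
            _ = _ := Real.sqrt_sq hB
        set A : ℝ := Real.sqrt (2 * u ^ 2 + 2 * (k:ℝ)) with hA
        have hA0 : 0 ≤ A := Real.sqrt_nonneg _
        calc gaussianReal u 1 (S k)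
            ≤ gaussianReal u 1 (Set.Iic (-u + A)) := measure_mono hsub'
          _ ≤ ENNReal.ofReal (Real.exp (-(u - (-u + A)) / 2)) := by
              apply gauss_tail; linarith
          _ ≤ ENNReal.ofReal (Real.exp 1 * Real.exp (-(k:ℝ) / 20)) := by
              apply ENNReal.ofReal_le_ofReal
              rw [← Real.exp_add]
              apply Real.exp_le_exp.mpr
              have : 1 + (k:ℝ)/10 ≤ u - (-u + A) := by linarith
              linarith
      · push_neg at hk
        calc μ (X k ⁻¹' S k) ≤ 1 := prob_le_one
          _ ≤ ENNReal.ofReal (Real.exp 1 * Real.exp (-(k:ℝ) / 20)) := by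
              rw [← Real.exp_add]
              apply ENNReal.one_le_ofReal.mpr
              apply Real.one_le_exp
              linarith [Nat.cast_nonneg (α := ℝ) k]
    have hsummable : Summable (fun k : ℕ => Real.exp 1 * Real.exp (-(k:ℝ) / 20)) := by
      have heq : (fun k : ℕ => Real.exp (-(k:ℝ) / 20)) = fun k : ℕ => (Real.exp (-1/20)) ^ k := by
        funext k
        rw [← Real.exp_nat_mul]
        congr 1; ring
      apply Summable.mul_left
      rw [heq]
      exact summable_geometric_of_lt_one (Real.exp_pos _).le
        (Real.exp_lt_one_iff.mpr (by norm_num))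
    have htsum : (∑' k, μ (X k ⁻¹' S k)) ≠ ∞ := by
      have h1 : (∑' k : ℕ, μ (X k ⁻¹' S k)) ≤
          ∑' k : ℕ, ENNReal.ofReal (Real.exp 1 * Real.exp (-(k:ℝ) / 20)) :=
        ENNReal.tsum_le_tsum hbd
      have h2 : (∑' k : ℕ, ENNReal.ofReal (Real.exp 1 * Real.exp (-(k:ℝ) / 20))) ≠ ∞ := by
        rw [← ENNReal.ofReal_tsum_of_nonneg (fun k => by positivity) hsummable]
        exact ENNReal.ofReal_ne_top
      exact fun h => h2 (top_le_iff.mp (h ▸ h1))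
    have hae := ae_eventually_notMem htsum
    apply tendstoInMeasure_of_tendsto_ae
    · intro K
      exact (measurable_const.mul (Finset.measurable_sum _
        fun k _ => (hmeasf _).comp (hXmeas k))).aestronglyMeasurable
    · filter_upwards [hae] with ω hω
      obtain ⟨N, hN⟩ := eventually_atTop.mp hω
      set r : ℝ := Real.exp (-1) with hr
      have hr0 : (0:ℝ) ≤ r := (Real.exp_pos _).le
      have hr1 : r < 1 := Real.exp_lt_one_iff.mpr (by norm_num)
      have hgeo : Summable (fun k : ℕ => r ^ k) := summable_geometric_of_lt_one hr0 hr1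
      have hrk : ∀ k : ℕ, r ^ k = Real.exp (-(k:ℝ)) := by
        intro k
        rw [hr, ← Real.exp_nat_mul]
        congr 1; ring
      set C : ℝ := (∑ k ∈ Finset.range N, f ((k:ℝ) + 1) (X k ω)) + ∑' k : ℕ, r ^ k with hC
      have hCb : ∀ K, ∑ k ∈ Finset.range K, f ((k:ℝ) + 1) (X k ω) ≤ C := by
        intro K
        have hterm : ∀ k : ℕ, f ((k:ℝ) + 1) (X k ω) ≤
            (if k < N then f ((k:ℝ) + 1) (X k ω) else 0) + r ^ k := by
          intro k
          by_cases hk : k < N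
          · rw [if_pos hk]; exact le_add_of_nonneg_right (pow_nonneg hr0 _)
          · rw [if_neg hk, zero_add, hrk]
            have h := hN k (le_of_not_gt hk)
            simp only [Set.mem_preimage, hSdef, Set.mem_setOf_eq, not_lt] at h
            exact h
        calc ∑ k ∈ Finset.range K, f ((k:ℝ) + 1) (X k ω)
            ≤ ∑ k ∈ Finset.range K,
                ((if k < N then f ((k:ℝ) + 1) (X k ω) else 0) + r ^ k) :=
              Finset.sum_le_sum fun k _ => hterm k
          _ = (∑ k ∈ Finset.range K, if k < N then f ((k:ℝ) + 1) (X k ω) else 0)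
              + ∑ k ∈ Finset.range K, r ^ k := Finset.sum_add_distrib
          _ ≤ (∑ k ∈ Finset.range N, f ((k:ℝ) + 1) (X k ω)) + ∑' k : ℕ, r ^ k := by
              apply add_le_add
              · rw [← Finset.sum_filter]
                apply Finset.sum_le_sum_of_subset_of_nonneg
                · intro x hx
                  simp only [Finset.mem_filter, Finset.mem_range] at hx
                  exact Finset.mem_range.mpr hx.2
                · exact fun i _ _ => (hfpos _ _).le
              · exact Summable.sum_le_tsum _ (fun i _ => pow_nonneg hr0 i) hgeo
      have hCnn : 0 ≤ C := by
        rw [hC]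
        have := hCb 0
        simp at this
        positivity
      apply squeeze_zero
        (fun K => mul_nonneg (inv_nonneg.mpr (Nat.cast_nonneg K))
          (Finset.sum_nonneg fun k _ => (hfpos _ _).le))
        (g := fun K : ℕ => (K:ℝ)⁻¹ * C)
        (fun K => mul_le_mul_of_nonneg_left (hCb K) (inv_nonneg.mpr (Nat.cast_nonneg K)))
      simpa using tendsto_inv_atTop_nhds_zero_nat.mul_const C
  refine ⟨part1, part2, ?_⟩
  show ¬ TendstoInMeasure μ _ atTop _
  set g : ℕ → Ω' → ℝ :=
    fun K ω => (K : ℝ)⁻¹ * ∑ k ∈ Finset.range K, f ((k : ℝ) + 1) (X k ω) with hg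
  have h2 : TendstoInMeasure μ g atTop (fun _ => (0:ℝ)) := part2
  intro h3
  set c : ℝ := (Real.sqrt 2)⁻¹ with hc
  have hcpos : 0 < c := by positivity
  have hε : 0 < c / 3 := by positivity
  have t2 := tendstoInMeasure_iff_dist.mp h2 (c / 3) hε
  have t3 := tendstoInMeasure_iff_dist.mp h3 (c / 3) hε
  have hsum : Tendsto (fun K => μ {ω | c / 3 ≤ dist (g K ω) 0}
      + μ {ω | c / 3 ≤ dist (g K ω) c}) atTop (𝓝 0) := by
    simpa using t2.add t3
  have hev := hsum.eventually_lt_const (by norm_num : (0:ℝ≥0∞) < 1)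
  obtain ⟨K, hK⟩ := hev.exists
  have huniv : (Set.univ : Set Ω') ⊆
      {ω | c / 3 ≤ dist (g K ω) 0} ∪ {ω | c / 3 ≤ dist (g K ω) c} := by
    intro ω _
    by_contra h
    simp only [Set.mem_union, Set.mem_setOf_eq, not_or, not_le] at h
    obtain ⟨h1, h2'⟩ := h
    have htri : dist c (0:ℝ) ≤ dist c (g K ω) + dist (g K ω) 0 := dist_triangle _ _ _
    rw [dist_comm c (g K ω)] at htri
    have : dist c (0:ℝ) = c := by
      rw [Real.dist_eq, sub_zero, abs_of_pos hcpos]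
    linarith
  have hone : (1:ℝ≥0∞) ≤ μ {ω | c / 3 ≤ dist (g K ω) 0} + μ {ω | c / 3 ≤ dist (g K ω) c} :=
    calc (1:ℝ≥0∞) = μ Set.univ := (measure_univ).symm
      _ ≤ μ ({ω | c / 3 ≤ dist (g K ω) 0} ∪ {ω | c / 3 ≤ dist (g K ω) c}) :=
          measure_mono huniv
      _ ≤ _ := measure_union_le _ _
  exact absurd hK (not_lt.mpr hone)
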